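/- Let R:(0,∞)→(0,∞) be monotone on (0,∞), bounded away from 0 and ∞ on every compact subset of (0,∞), and regularly varying at +∞ with index −α where α<1. Let σ_n² = Σ_{k=1}^n R(k) and ρ_n(t) = σ_n^{−2} Σ_{k=1}^n R(k) cos(2πkt/n). Then for every δ>0 there exist C>0 and n₀∈ℕ such that for all n≥n₀ and all real t∈[1, n/2], |ρ_n(t)| ≤ C max( t^{α−1+δ}, 1/t ). -/

import Mathlib

open Filter Real

/-- A function `f` is regularly varying at `+∞` with index `β` if for every `λ > 0`,
`f(λx)/f(x) → λ^β` as `x → +∞`. -/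
def RegularlyVarying (f : ℝ → ℝ) (β : ℝ) : Prop :=
  ∀ l : ℝ, 0 < l → Filter.Tendsto (fun x => f (l * x) / f x) Filter.atTop (nhds (l ^ β))

lemma cos_sum_bound (θ : ℝ) (h1 : 0 < θ) (h2 : θ < 2*π) (m j : ℕ) :
    |∑ k ∈ Finset.Ioc m j, Real.cos (k*θ)| ≤ 1 / Real.sin (θ/2) := by
  have hs : 0 < Real.sin (θ/2) :=
    Real.sin_pos_of_pos_of_lt_pi (by linarith) (by linarith)
  rcases le_or_gt j m with hj | hj
  · rw [Finset.Ioc_eq_empty (by omega)]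
    simp [le_of_lt, hs, le_div_iff₀ hs]
  set z : ℂ := Complex.exp (θ * Complex.I) with hz
  have hzabs : ‖z‖ = 1 := Complex.norm_exp_ofReal_mul_I θ
  have hzsub : ‖z - 1‖ = 2 * Real.sin (θ/2) := by
    have hre : (z - 1).re = Real.cos θ - 1 := by
      simp [hz, Complex.exp_ofReal_mul_I_re]
    have him : (z - 1).im = Real.sin θ := by
      simp [hz, Complex.exp_mul_I, Complex.sin_ofReal_re, Complex.cos_ofReal_re]
    have hnormSq : Complex.normSq (z - 1) = (2 * Real.sin (θ/2))^2 := by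
      rw [Complex.normSq_apply, hre, him]
      have hcos : Real.cos θ = 1 - 2 * Real.sin (θ/2)^2 := by
        have h := Real.cos_sq (θ/2)
        rw [show 2 * (θ/2) = θ by ring] at h
        have h2 := Real.sin_sq_add_cos_sq (θ/2)
        linarith
      have hsin : Real.sin θ ^ 2 = 1 - Real.cos θ ^2 := by
        have := Real.sin_sq_add_cos_sq θ; linarith
      nlinarith [hsin, hcos]
    have := Complex.sq_norm (z - 1)
    nlinarith [norm_nonneg (z - 1), hs]
  have hzne : z ≠ 1 := by
    intro h
    rw [h] at hzsub; simp at hzsub; linarith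
  -- geometric sum
  have hsum : ∑ k ∈ Finset.Ioc m j, (z:ℂ)^k = z^(m+1) * ((z^(j-m) - 1)/(z - 1)) := by
    have : ∑ k ∈ Finset.Ioc m j, (z:ℂ)^k = ∑ i ∈ Finset.range (j - m), z^(m+1+i) := by
      rw [← Finset.Ico_add_one_add_one_eq_Ioc, Finset.sum_Ico_eq_sum_range]
      apply Finset.sum_congr
      · congr 1; omega
      · intro i _
        congr 1
    rw [this]
    have : ∑ i ∈ Finset.range (j - m), z^(m+1+i) = z^(m+1) * ∑ i ∈ Finset.range (j-m), z^i := by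
      rw [Finset.mul_sum]
      apply Finset.sum_congr rfl
      intro i _; rw [pow_add]
    rw [this, geom_sum_eq hzne]
  have habs : ‖∑ k ∈ Finset.Ioc m j, (z:ℂ)^k‖ ≤ 1 / Real.sin (θ/2) := by
    rw [hsum]
    rw [norm_mul, norm_div, norm_pow, hzabs, one_pow, one_mul, hzsub]
    have hnum : ‖z^(j-m) - 1‖ ≤ 2 := by
      calc ‖z^(j-m) - 1‖ ≤ ‖z^(j-m)‖ + 1 := by
            simpa using norm_sub_le (z^(j-m)) 1
        _ ≤ 2 := by rw [norm_pow, hzabs, one_pow]; norm_num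
    rw [div_le_div_iff₀ (by linarith) hs]
    nlinarith [hs.le]
  calc |∑ k ∈ Finset.Ioc m j, Real.cos (k*θ)|
      = |(∑ k ∈ Finset.Ioc m j, (z:ℂ)^k).re| := by
        congr 1
        rw [Complex.re_sum]
        apply Finset.sum_congr rfl
        intro k _
        rw [hz, ← Complex.exp_nat_mul]
        rw [show (k : ℂ) * (θ * Complex.I) = ((k * θ : ℝ) : ℂ) * Complex.I by push_cast; ring]
        rw [Complex.exp_ofReal_mul_I_re]
    _ ≤ ‖∑ k ∈ Finset.Ioc m j, (z:ℂ)^k‖ := Complex.abs_re_le_norm _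
    _ ≤ 1 / Real.sin (θ/2) := habs

lemma abel_identity (a c : ℕ → ℝ) (m : ℕ) : ∀ n, m ≤ n →
    ∑ k ∈ Finset.Ioc m n, a k * c k
      = (∑ k ∈ Finset.Ioc m n, (a k - a (k+1)) * (∑ i ∈ Finset.Ioc m k, c i))
        + a (n+1) * ∑ i ∈ Finset.Ioc m n, c i := by
  refine Nat.le_induction ?_ ?_
  · simp
  · intro n hn ih
    rw [Finset.sum_Ioc_succ_top (by omega), Finset.sum_Ioc_succ_top (by omega),
      Finset.sum_Ioc_succ_top hn (fun i => c i), ih]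
    ring

lemma telescope_Ioc (a : ℕ → ℝ) (m : ℕ) : ∀ n, m ≤ n →
    ∑ k ∈ Finset.Ioc m n, (a k - a (k+1)) = a (m+1) - a (n+1) := by
  refine Nat.le_induction ?_ ?_
  · simp
  · intro n hn ih
    rw [Finset.sum_Ioc_succ_top (by omega), ih]
    ring

lemma abel_antitone_bound (a c : ℕ → ℝ) (m n : ℕ) (hmn : m ≤ n) (B : ℝ)
    (hB : ∀ j, m ≤ j → j ≤ n → |∑ i ∈ Finset.Ioc m j, c i| ≤ B)
    (ha : ∀ k l : ℕ, m+1 ≤ k → k ≤ l → a l ≤ a k) (ha0 : 0 ≤ a (n+1)) :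
    |∑ k ∈ Finset.Ioc m n, a k * c k| ≤ B * a (m+1) := by
  have hB0 : 0 ≤ B := le_trans (abs_nonneg _) (hB m le_rfl hmn)
  rw [abel_identity a c m n hmn]
  calc |(∑ k ∈ Finset.Ioc m n, (a k - a (k+1)) * (∑ i ∈ Finset.Ioc m k, c i))
        + a (n+1) * ∑ i ∈ Finset.Ioc m n, c i|
      ≤ |∑ k ∈ Finset.Ioc m n, (a k - a (k+1)) * (∑ i ∈ Finset.Ioc m k, c i)|
        + |a (n+1) * ∑ i ∈ Finset.Ioc m n, c i| := abs_add_le _ _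
    _ ≤ (∑ k ∈ Finset.Ioc m n, (a k - a (k+1)) * B) + a (n+1) * B := by
        gcongr
        · calc |∑ k ∈ Finset.Ioc m n, (a k - a (k+1)) * (∑ i ∈ Finset.Ioc m k, c i)|
              ≤ ∑ k ∈ Finset.Ioc m n, |(a k - a (k+1)) * (∑ i ∈ Finset.Ioc m k, c i)| :=
                Finset.abs_sum_le_sum_abs _ _
            _ ≤ ∑ k ∈ Finset.Ioc m n, (a k - a (k+1)) * B := by
                apply Finset.sum_le_sum
                intro k hk
                simp only [Finset.mem_Ioc] at hk
                rw [abs_mul]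
                have h1 : 0 ≤ a k - a (k+1) := by
                  have := ha k (k+1) (by omega) (by omega); linarith
                rw [abs_of_nonneg h1]
                exact mul_le_mul_of_nonneg_left (hB k (by omega) hk.2) h1
        · rw [abs_mul, abs_of_nonneg ha0]
          exact mul_le_mul_of_nonneg_left (hB n hmn le_rfl) ha0
    _ = (a (m+1) - a (n+1)) * B + a (n+1) * B := by
        rw [← Finset.sum_mul, telescope_Ioc a m n hmn]
    _ = B * a (m+1) := by ring

lemma abel_monotone_bound (a c : ℕ → ℝ) (m n : ℕ) (hmn : m ≤ n) (B : ℝ)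
    (hB : ∀ j, m ≤ j → j ≤ n → |∑ i ∈ Finset.Ioc m j, c i| ≤ B)
    (ha : ∀ k l : ℕ, m+1 ≤ k → k ≤ l → a k ≤ a l) (ha0 : 0 ≤ a (m+1)) :
    |∑ k ∈ Finset.Ioc m n, a k * c k| ≤ 2 * B * a (n+1) := by
  have hB0 : 0 ≤ B := le_trans (abs_nonneg _) (hB m le_rfl hmn)
  have han : 0 ≤ a (n+1) := le_trans ha0 (ha (m+1) (n+1) le_rfl (by omega))
  rw [abel_identity a c m n hmn]
  calc |(∑ k ∈ Finset.Ioc m n, (a k - a (k+1)) * (∑ i ∈ Finset.Ioc m k, c i))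
        + a (n+1) * ∑ i ∈ Finset.Ioc m n, c i|
      ≤ |∑ k ∈ Finset.Ioc m n, (a k - a (k+1)) * (∑ i ∈ Finset.Ioc m k, c i)|
        + |a (n+1) * ∑ i ∈ Finset.Ioc m n, c i| := abs_add_le _ _
    _ ≤ (∑ k ∈ Finset.Ioc m n, (a (k+1) - a k) * B) + a (n+1) * B := by
        gcongr
        · calc |∑ k ∈ Finset.Ioc m n, (a k - a (k+1)) * (∑ i ∈ Finset.Ioc m k, c i)|
              ≤ ∑ k ∈ Finset.Ioc m n, |(a k - a (k+1)) * (∑ i ∈ Finset.Ioc m k, c i)| :=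
                Finset.abs_sum_le_sum_abs _ _
            _ ≤ ∑ k ∈ Finset.Ioc m n, (a (k+1) - a k) * B := by
                apply Finset.sum_le_sum
                intro k hk
                simp only [Finset.mem_Ioc] at hk
                rw [abs_mul]
                have h1 : 0 ≤ a (k+1) - a k := by
                  have := ha k (k+1) (by omega) (by omega); linarith
                rw [abs_sub_comm, abs_of_nonneg h1]
                exact mul_le_mul_of_nonneg_left (hB k (by omega) hk.2) h1
        · rw [abs_mul, abs_of_nonneg han]
          exact mul_le_mul_of_nonneg_left (hB n hmn le_rfl) han
    _ = (a (n+1) - a (m+1)) * B + a (n+1) * B := by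
        rw [← Finset.sum_mul]
        congr 1
        have : ∑ k ∈ Finset.Ioc m n, (a (k+1) - a k) = -∑ k ∈ Finset.Ioc m n, (a k - a (k+1)) := by
          rw [← Finset.sum_neg_distrib]
          apply Finset.sum_congr rfl; intro k _; ring
        rw [this, telescope_Ioc a m n hmn]
        ring
    _ ≤ 2 * B * a (n+1) := by nlinarith

lemma exists_dyadic' {r : ℝ} (hr : 1 ≤ r) : ∃ j : ℕ, (2:ℝ)^j ≤ r ∧ r < 2^(j+1) := by
  have h0 : (0:ℝ) ≤ r := by linarith
  have hn : 1 ≤ ⌊r⌋₊ := (Nat.one_le_floor_iff _).mpr hr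
  refine ⟨Nat.log 2 ⌊r⌋₊, ?_, ?_⟩
  · calc ((2:ℝ)^Nat.log 2 ⌊r⌋₊) = ((2^Nat.log 2 ⌊r⌋₊ : ℕ) : ℝ) := by push_cast; ring
      _ ≤ (⌊r⌋₊ : ℝ) := by exact_mod_cast Nat.pow_log_le_self 2 (by omega)
      _ ≤ r := Nat.floor_le h0
  · have h1 : ⌊r⌋₊ < 2 ^ (Nat.log 2 ⌊r⌋₊ + 1) := Nat.lt_pow_succ_log_self (by norm_num) _
    have h2 : (⌊r⌋₊ : ℝ) + 1 ≤ ((2 ^ (Nat.log 2 ⌊r⌋₊ + 1) : ℕ) : ℝ) := by exact_mod_cast h1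
    calc r < (⌊r⌋₊ : ℝ) + 1 := Nat.lt_floor_add_one r
      _ ≤ _ := by push_cast at h2 ⊢; linarith

lemma potter_lower (R : ℝ → ℝ) (hRpos : ∀ x : ℝ, 0 < x → 0 < R x)
    (hanti : AntitoneOn R (Set.Ioi (0:ℝ)))
    (s X : ℝ) (hs : 0 ≤ s) (hX : 1 ≤ X)
    (h2 : ∀ x : ℝ, X ≤ x → (2:ℝ)^(-s) * R x ≤ R (2*x)) :
    ∀ x y : ℝ, X ≤ x → x ≤ y → (2:ℝ)^(-s) * (y/x)^(-s) * R x ≤ R y := by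
  intro x y hXx hxy
  have hx0 : (0:ℝ) < x := by linarith
  have hy0 : (0:ℝ) < y := by linarith
  have hRx : 0 < R x := hRpos x hx0
  have step : ∀ i : ℕ, (2:ℝ)^(-(s*i)) * R x ≤ R (2^i * x) := by
    intro i
    induction i with
    | zero => simp
    | succ i ih =>
      have hXxi : X ≤ 2^i * x := by
        have : (1:ℝ) ≤ 2^i := one_le_pow₀ (by norm_num)
        nlinarith
      calc (2:ℝ)^(-(s*(i+1:ℕ))) * R x
          = (2:ℝ)^(-s) * ((2:ℝ)^(-(s*i)) * R x) := by
            rw [← mul_assoc, ← Real.rpow_add two_pos]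
            push_cast; ring_nf
        _ ≤ (2:ℝ)^(-s) * R (2^i * x) := by
            apply mul_le_mul_of_nonneg_left ih (Real.rpow_nonneg (by norm_num) _)
        _ ≤ R (2 * (2^i * x)) := h2 _ hXxi
        _ = R (2^(i+1) * x) := by ring_nf
  have hr1 : (1:ℝ) ≤ y / x := (one_le_div hx0).mpr hxy
  obtain ⟨j, hj1, hj2⟩ := exists_dyadic' hr1
  have key : (2:ℝ)^(-(s*(j+1:ℕ))) * R x ≤ R y := by
    refine le_trans (step (j+1)) ?_
    have hmem1 : y ∈ Set.Ioi (0:ℝ) := hy0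
    have hmem2 : (2:ℝ)^(j+1) * x ∈ Set.Ioi (0:ℝ) := by
      have : (0:ℝ) < 2^(j+1) := by positivity
      exact Set.mem_Ioi.mpr (by nlinarith)
    apply hanti hmem1 hmem2
    calc y = (y/x) * x := by field_simp
      _ ≤ 2^(j+1) * x := by nlinarith
  refine le_trans ?_ key
  apply mul_le_mul_of_nonneg_right _ hRx.le
  have h2j : ((2:ℝ)^j)^(-s) = (2:ℝ)^(-(s*j)) := by
    rw [← Real.rpow_natCast 2 j, ← Real.rpow_mul (by norm_num)]
    ring_nf
  calc (2:ℝ)^(-s) * (y/x)^(-s) ≤ (2:ℝ)^(-s) * ((2:ℝ)^j)^(-s) := by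
        apply mul_le_mul_of_nonneg_left _ (Real.rpow_nonneg (by norm_num) _)
        exact Real.rpow_le_rpow_of_nonpos (by positivity) hj1 (by linarith)
    _ = (2:ℝ)^(-(s*(j+1:ℕ))) := by
        rw [h2j, ← Real.rpow_add two_pos]
        push_cast; ring_nf

lemma sum_rpow_le (s : ℝ) (hs0 : 0 < s) (hs1 : s < 1) :
    ∀ m : ℕ, ∑ k ∈ Finset.Icc 1 m, (k:ℝ)^(-s) ≤ (1/(1-s)) * (m:ℝ)^(1-s) := by
  have hp0 : 0 < 1 - s := by linarith
  intro m
  induction m with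
  | zero => simp [Real.zero_rpow (by linarith : (1:ℝ) - s ≠ 0)]
  | succ m ih =>
    rw [← Finset.Ico_add_one_right_eq_Icc, Finset.sum_Ico_succ_top (by omega), Finset.Ico_add_one_right_eq_Icc]
    have hb1 : (1:ℝ) ≤ (m:ℝ) + 1 := by have := Nat.cast_nonneg (α := ℝ) m; linarith
    have hb0 : (0:ℝ) < (m:ℝ) + 1 := by positivity
    have hinv : (-1:ℝ) ≤ -1/((m:ℝ)+1) := by
      rw [neg_div, neg_le_neg_iff, div_le_one hb0]; exact hb1
    have hbern : (1 + (-1/((m:ℝ)+1)))^(1-s) ≤ 1 + (1-s) * (-1/((m:ℝ)+1)) :=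
      rpow_one_add_le_one_add_mul_self hinv hp0.le (by linarith)
    have hnn : (0:ℝ) ≤ 1 + (-1/((m:ℝ)+1)) := by
      have : 1/((m:ℝ)+1) ≤ 1 := by rw [div_le_one hb0]; exact hb1
      have h0 : (0:ℝ) < 1/((m:ℝ)+1) := by positivity
      linarith
    have hkey : (m:ℝ)^(1-s) ≤ ((m:ℝ)+1)^(1-s) - (1-s) * ((m:ℝ)+1)^(-s) := by
      have hm : (m:ℝ) = (1 + (-1/((m:ℝ)+1))) * ((m:ℝ)+1) := by field_simp; ring
      have h1 : (m:ℝ)^(1-s) = (1 + (-1/((m:ℝ)+1)))^(1-s) * ((m:ℝ)+1)^(1-s) := by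
        nth_rewrite 1 [hm]
        rw [Real.mul_rpow hnn hb0.le]
      have h2 : (1 + (-1/((m:ℝ)+1)))^(1-s) * ((m:ℝ)+1)^(1-s)
          ≤ (1 + (1-s) * (-1/((m:ℝ)+1))) * ((m:ℝ)+1)^(1-s) :=
        mul_le_mul_of_nonneg_right hbern (Real.rpow_nonneg hb0.le _)
      have h3 : (1 + (1-s) * (-1/((m:ℝ)+1))) * ((m:ℝ)+1)^(1-s)
          = ((m:ℝ)+1)^(1-s) - (1-s) * ((m:ℝ)+1)^(-s) := by
        have hbs : ((m:ℝ)+1)^(-s) = ((m:ℝ)+1)^(1-s) / ((m:ℝ)+1) := by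
          rw [show -s = (1-s) - 1 by ring, Real.rpow_sub hb0, Real.rpow_one]
        rw [hbs]; field_simp; ring
      calc (m:ℝ)^(1-s) = _ := h1
        _ ≤ _ := h2
        _ = _ := h3
    have hfin : ((m:ℝ)+1)^(-s) ≤ (1/(1-s)) * (((m:ℝ)+1)^(1-s) - (m:ℝ)^(1-s)) := by
      rw [div_mul_eq_mul_div, le_div_iff₀ hp0]
      nlinarith
    have hcast : ((m+1:ℕ):ℝ) = (m:ℝ) + 1 := by push_cast; ring
    rw [hcast]
    calc ∑ k ∈ Finset.Icc 1 m, (k:ℝ)^(-s) + ((m:ℝ)+1)^(-s)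
        ≤ (1/(1-s)) * (m:ℝ)^(1-s) + (1/(1-s)) * (((m:ℝ)+1)^(1-s) - (m:ℝ)^(1-s)) := by
          linarith
      _ = (1/(1-s)) * ((m:ℝ)+1)^(1-s) := by ring

lemma partial_cos_bound (n : ℕ) (t : ℝ) (hn : 1 ≤ n) (ht1 : 1 ≤ t) (ht2 : t ≤ (n:ℝ)/2) (m j : ℕ) :
    |∑ k ∈ Finset.Ioc m j, Real.cos (k * (2*π*t/n))| ≤ (n:ℝ)/(2*t) := by
  have hn0 : (0:ℝ) < n := by exact_mod_cast hn
  have hπ := Real.pi_pos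
  have ht0 : (0:ℝ) < t := by linarith
  have hθ0 : 0 < 2*π*t/n := by positivity
  have hθπ : 2*π*t/n ≤ π := by
    rw [div_le_iff₀ hn0]
    nlinarith
  have h1 : |∑ k ∈ Finset.Ioc m j, Real.cos (k * (2*π*t/n))| ≤ 1 / Real.sin ((2*π*t/n)/2) :=
    cos_sum_bound _ hθ0 (by nlinarith) m j
  have h2 : (2*π*t/n)/2 = π*t/n := by ring
  rw [h2] at h1
  have h3 : 2*t/n ≤ Real.sin (π*t/n) := by
    have ha : 0 ≤ π*t/n := by positivity
    have hb : π*t/n ≤ π/2 := by rw [div_le_div_iff₀ hn0 two_pos]; nlinarith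
    have := Real.mul_le_sin ha hb
    calc 2*t/n = 2/π * (π*t/n) := by field_simp
      _ ≤ Real.sin (π*t/n) := this
  have h4 : (0:ℝ) < 2*t/n := by positivity
  calc |∑ k ∈ Finset.Ioc m j, Real.cos (k * (2*π*t/n))| ≤ 1 / Real.sin (π*t/n) := h1
    _ ≤ 1 / (2*t/n) := by apply one_div_le_one_div_of_le h4 h3
    _ = (n:ℝ)/(2*t) := by field_simp


lemma mono_branch (R : ℝ → ℝ) (hRpos : ∀ x : ℝ, 0 < x → 0 < R x)
    (hmono : MonotoneOn R (Set.Ioi (0:ℝ)))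
    (α δ : ℝ) (hα : α < 1) (hδ0 : 0 < δ) (hδle : δ ≤ (1-α)/2)
    (hRV : ∀ l : ℝ, 0 < l → Filter.Tendsto (fun x => R (l * x) / R x) Filter.atTop (nhds (l ^ (-α)))) :
    ∃ C : ℝ, 0 < C ∧ ∃ n₀ : ℕ, ∀ n : ℕ, n₀ ≤ n → ∀ t : ℝ, 1 ≤ t → t ≤ (n:ℝ)/2 →
      |∑ k ∈ Finset.Icc 1 n, R k * Real.cos (2 * π * k * t / n)|
        ≤ (C * max (t ^ (α - 1 + δ)) (1 / t)) * (∑ k ∈ Finset.Icc 1 n, R k) := by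
  -- constants from regular variation
  have hL1 : (0:ℝ) < ((1:ℝ)/2) ^ (-α) := Real.rpow_pos_of_pos (by norm_num) _
  set c₁ : ℝ := ((1:ℝ)/2) ^ (-α) / 2 with hc₁
  have hc₁0 : 0 < c₁ := by positivity
  have hev1 : ∀ᶠ x in atTop, c₁ ≤ R ((1/2) * x) / R x :=
    (hRV (1/2) (by norm_num)).eventually (eventually_ge_nhds (by linarith))
  set D : ℝ := (2:ℝ) ^ (-α) + 1 with hD
  have hD0 : 0 < D := by
    have : (0:ℝ) < (2:ℝ) ^ (-α) := Real.rpow_pos_of_pos (by norm_num) _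
    linarith
  have hev2 : ∀ᶠ x in atTop, R (2 * x) / R x ≤ D :=
    (hRV 2 (by norm_num)).eventually (eventually_le_nhds (by rw [hD]; linarith))
  have hCpos : 0 < 2 * (1 + D) / c₁ := div_pos (by nlinarith) hc₁0
  obtain ⟨X₁, hX₁⟩ := eventually_atTop.mp hev1
  obtain ⟨X₂, hX₂⟩ := eventually_atTop.mp hev2
  set X : ℝ := max 1 (max X₁ X₂) with hX
  have hX1 : 1 ≤ X := le_max_left _ _
  refine ⟨2 * (1 + D) / c₁, hCpos, max 2 ⌈X⌉₊, ?_⟩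
  intro n hn t ht1 ht2
  have hn2 : 2 ≤ n := le_trans (le_max_left _ _) hn
  have hnX : X ≤ (n:ℝ) := by
    calc X ≤ ⌈X⌉₊ := Nat.le_ceil X
      _ ≤ (n:ℝ) := by exact_mod_cast le_trans (le_max_right _ _) hn
  have hn0 : (0:ℝ) < n := by positivity
  have ht0 : (0:ℝ) < t := by linarith
  have hπ := Real.pi_pos
  -- lower bound for σ
  set σ : ℝ := ∑ k ∈ Finset.Icc 1 n, R k with hσ
  have hσpos : 0 < σ := by
    apply Finset.sum_pos
    · intro k hk
      simp only [Finset.mem_Icc] at hk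
      exact hRpos _ (by exact_mod_cast (by omega : 0 < k))
    · exact ⟨1, by simp only [Finset.mem_Icc]; omega⟩
  have hRn0 : 0 < R n := hRpos _ hn0
  have hRhalf : c₁ * R n ≤ R ((n:ℝ)/2) := by
    have h := hX₁ (n:ℝ) (le_trans (le_trans (le_max_left X₁ X₂) (le_max_right 1 _)) hnX)
    rw [le_div_iff₀ hRn0] at h
    have heq : (1:ℝ)/2 * (n:ℝ) = (n:ℝ)/2 := by ring
    rw [heq] at h
    linarith
  have hσge : c₁ / 2 * ((n:ℝ) * R n) ≤ σ := by
    set K : ℕ := n/2 + 1 with hK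
    have hsub : Finset.Icc K n ⊆ Finset.Icc 1 n := by
      apply Finset.Icc_subset_Icc_left; omega
    have hcard : (Finset.Icc K n).card = n - n/2 := by
      rw [Nat.card_Icc]; omega
    have hterm : ∀ k ∈ Finset.Icc K n, R ((n:ℝ)/2) ≤ R k := by
      intro k hk
      simp only [Finset.mem_Icc] at hk
      have hk2 : (n:ℝ)/2 ≤ (k:ℝ) := by
        have : (n:ℝ) ≤ 2 * k := by
          have : n ≤ 2 * k := by omega
          exact_mod_cast this
        linarith
      have hk1 : 1 ≤ k := by omega
      exact hmono (Set.mem_Ioi.mpr (by positivity))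
        (Set.mem_Ioi.mpr (by exact_mod_cast (by omega : 0 < k))) hk2
    have h1 : ((Finset.Icc K n).card : ℝ) * R ((n:ℝ)/2) ≤ ∑ k ∈ Finset.Icc K n, R k := by
      have := Finset.card_nsmul_le_sum (Finset.Icc K n) (fun k => R k) (R ((n:ℝ)/2)) hterm
      simpa [nsmul_eq_mul] using this
    have h2 : ∑ k ∈ Finset.Icc K n, R k ≤ σ := by
      apply Finset.sum_le_sum_of_subset_of_nonneg hsub
      intro k hk _
      simp only [Finset.mem_Icc] at hk
      exact (hRpos _ (by exact_mod_cast (by omega : 0 < k) : (0:ℝ) < k)).le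
    have hcard2 : (n:ℝ)/2 ≤ ((Finset.Icc K n).card : ℝ) := by
      rw [hcard]
      have : n ≤ 2 * (n - n/2) := by omega
      have := (Nat.cast_le (α := ℝ)).mpr this
      push_cast at this ⊢
      linarith
    calc c₁/2 * ((n:ℝ) * R n) = (n:ℝ)/2 * (c₁ * R n) := by ring
      _ ≤ ((Finset.Icc K n).card : ℝ) * R ((n:ℝ)/2) := by
          apply mul_le_mul hcard2 hRhalf (mul_nonneg hc₁0.le hRn0.le) (Nat.cast_nonneg _)
      _ ≤ σ := le_trans h1 h2
  -- split the sum
  set θ : ℝ := 2*π*t/n with hθ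
  have hsplit : ∑ k ∈ Finset.Icc 1 n, R k * Real.cos (2 * π * k * t / n)
      = ∑ k ∈ Finset.Ioc 0 n, R k * Real.cos (k * θ) := by
    rw [← Finset.Icc_add_one_left_eq_Ioc]
    apply Finset.sum_congr rfl
    intro k _
    congr 1
    rw [hθ]; push_cast; ring
  set m : ℕ := ⌊(n:ℝ)/t⌋₊ with hm
  have hmle : (m:ℝ) ≤ (n:ℝ)/t := Nat.floor_le (by positivity)
  have hm2 : 2 ≤ m := by
    have h2 : (2:ℝ) ≤ (n:ℝ)/t := by
      rw [le_div_iff₀ ht0]; linarith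
    exact_mod_cast Nat.le_floor (by exact_mod_cast h2)
  have hmn : m ≤ n := by
    have : (m:ℝ) ≤ (n:ℝ) := le_trans hmle (by
      rw [div_le_iff₀ ht0]; nlinarith)
    exact_mod_cast this
  have hsum2 : ∑ k ∈ Finset.Ioc 0 m, (R k * Real.cos (k * θ)) + ∑ k ∈ Finset.Ioc m n, (R k * Real.cos (k * θ))
      = ∑ k ∈ Finset.Ioc 0 n, R k * Real.cos (k * θ) :=
    Finset.sum_Ioc_consecutive _ (by omega) hmn
  -- first part
  have hS1 : |∑ k ∈ Finset.Ioc 0 m, R k * Real.cos (k * θ)| ≤ ((n:ℝ)/t) * R n := by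
    calc |∑ k ∈ Finset.Ioc 0 m, R k * Real.cos (k * θ)|
        ≤ ∑ k ∈ Finset.Ioc 0 m, |R k * Real.cos (k * θ)| := Finset.abs_sum_le_sum_abs _ _
      _ ≤ ∑ k ∈ Finset.Ioc 0 m, R n := by
          apply Finset.sum_le_sum
          intro k hk
          simp only [Finset.mem_Ioc] at hk
          have hk0 : (0:ℝ) < k := by exact_mod_cast hk.1
          have hRk := hRpos _ hk0
          rw [abs_mul, abs_of_pos hRk]
          calc R k * |Real.cos (k * θ)| ≤ R k * 1 := by
                apply mul_le_mul_of_nonneg_left (Real.abs_cos_le_one _) hRk.le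
            _ = R k := mul_one _
            _ ≤ R n := hmono (Set.mem_Ioi.mpr hk0) (Set.mem_Ioi.mpr hn0)
                (by exact_mod_cast le_trans hk.2 hmn)
      _ = (m:ℝ) * R n := by
          rw [Finset.sum_const, Nat.card_Ioc, nsmul_eq_mul]
          norm_num
      _ ≤ ((n:ℝ)/t) * R n := mul_le_mul_of_nonneg_right hmle hRn0.le
  -- second part
  have hB : ∀ j, m ≤ j → j ≤ n → |∑ i ∈ Finset.Ioc m j, Real.cos (i * θ)| ≤ (n:ℝ)/(2*t) :=
    fun j _ _ => partial_cos_bound n t (by omega) ht1 ht2 m j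
  have hRn1 : R ((n:ℝ)+1) ≤ D * R n := by
    have h := hX₂ (n:ℝ) (le_trans (le_trans (le_max_right X₁ X₂) (le_max_right 1 _)) hnX)
    rw [div_le_iff₀ hRn0] at h
    calc R ((n:ℝ)+1) ≤ R (2*(n:ℝ)) := by
          apply hmono (Set.mem_Ioi.mpr (by positivity)) (Set.mem_Ioi.mpr (by positivity))
          have : (1:ℝ) ≤ (n:ℝ) := by exact_mod_cast (by omega : 1 ≤ n)
          linarith
      _ ≤ D * R n := by linarith [h]
  have hS2 : |∑ k ∈ Finset.Ioc m n, R k * Real.cos (k * θ)| ≤ 2 * ((n:ℝ)/(2*t)) * (D * R n) := by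
    have habel := abel_monotone_bound (fun k : ℕ => R k) (fun k : ℕ => Real.cos (k * θ)) m n hmn
      ((n:ℝ)/(2*t)) hB
      (fun k l hk hkl => by
        have hk0 : (0:ℝ) < k := by
          have : 1 ≤ k := by omega
          exact_mod_cast this
        exact hmono (Set.mem_Ioi.mpr hk0)
          (Set.mem_Ioi.mpr (by exact_mod_cast lt_of_lt_of_le (by exact_mod_cast hk0) (by exact_mod_cast hkl)))
          (by exact_mod_cast hkl))
      (by
          exact (hRpos ((m+1:ℕ):ℝ) (by exact_mod_cast Nat.succ_pos m)).le)
    refine le_trans habel ?_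
    have hcast : ((n+1 : ℕ):ℝ) = (n:ℝ) + 1 := by push_cast; ring
    have : R ((n+1:ℕ):ℝ) ≤ D * R n := by rw [hcast]; exact hRn1
    exact mul_le_mul_of_nonneg_left this (by positivity)
  -- combine
  rw [hsplit, ← hsum2]
  have hcomb : |∑ k ∈ Finset.Ioc 0 m, (R k * Real.cos (k * θ)) + ∑ k ∈ Finset.Ioc m n, (R k * Real.cos (k * θ))|
      ≤ (1 + D) * (((n:ℝ)/t) * R n) := by
    calc |∑ k ∈ Finset.Ioc 0 m, (R k * Real.cos (k * θ)) + ∑ k ∈ Finset.Ioc m n, (R k * Real.cos (k * θ))|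
        ≤ |∑ k ∈ Finset.Ioc 0 m, (R k * Real.cos (k * θ))| + |∑ k ∈ Finset.Ioc m n, (R k * Real.cos (k * θ))| :=
          abs_add_le _ _
      _ ≤ ((n:ℝ)/t) * R n + 2 * ((n:ℝ)/(2*t)) * (D * R n) := add_le_add hS1 hS2
      _ = (1 + D) * (((n:ℝ)/t) * R n) := by field_simp
  refine le_trans hcomb ?_
  have hfin : (1 + D) * (((n:ℝ)/t) * R n) ≤ (2 * (1 + D) / c₁ * (1/t)) * σ := by
    have h1 : (2 * (1 + D) / c₁ * (1/t)) * (c₁ / 2 * ((n:ℝ) * R n)) = (1 + D) * (((n:ℝ)/t) * R n) := by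
      field_simp
    rw [← h1]
    apply mul_le_mul_of_nonneg_left hσge (by positivity)
  refine le_trans hfin ?_
  apply mul_le_mul_of_nonneg_right _ hσpos.le
  apply mul_le_mul_of_nonneg_left (le_max_right _ _) hCpos.le

set_option maxHeartbeats 2000000 in
lemma anti_branch (R : ℝ → ℝ) (hRpos : ∀ x : ℝ, 0 < x → 0 < R x)
    (hanti : AntitoneOn R (Set.Ioi (0:ℝ)))
    (α δ : ℝ) (hα : α < 1) (hδ0 : 0 < δ) (hδle : δ ≤ (1-α)/2)
    (hRV : ∀ l : ℝ, 0 < l → Filter.Tendsto (fun x => R (l * x) / R x) Filter.atTop (nhds (l ^ (-α)))) :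
    ∃ C : ℝ, 0 < C ∧ ∃ n₀ : ℕ, ∀ n : ℕ, n₀ ≤ n → ∀ t : ℝ, 1 ≤ t → t ≤ (n:ℝ)/2 →
      |∑ k ∈ Finset.Icc 1 n, R k * Real.cos (2 * π * k * t / n)|
        ≤ (C * max (t ^ (α - 1 + δ)) (1 / t)) * (∑ k ∈ Finset.Icc 1 n, R k) := by
  have hπ := Real.pi_pos
  -- α is nonneg
  have hα0 : 0 ≤ α := by
    by_contra hc
    push_neg at hc
    have h1 : (2:ℝ)^(-α) ≤ 1 := by
      apply le_of_tendsto (hRV 2 two_pos)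
      filter_upwards [eventually_ge_atTop (1:ℝ)] with x hx
      have hx0 : (0:ℝ) < x := by linarith
      rw [div_le_one (hRpos x hx0)]
      exact hanti (Set.mem_Ioi.mpr hx0) (Set.mem_Ioi.mpr (by linarith)) (by linarith)
    have h2 : (1:ℝ) < (2:ℝ)^(-α) :=
      Real.one_lt_rpow_iff_of_pos two_pos |>.mpr (Or.inl ⟨one_lt_two, by linarith⟩)
    linarith
  set s : ℝ := α + δ/2 with hsdef
  have hs0 : 0 < s := by rw [hsdef]; linarith
  have hs1 : s < 1 := by rw [hsdef]; linarith
  have hp0 : (0:ℝ) < 1 - s := by linarith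
  -- doubling lower bound
  have hss : (2:ℝ)^(-s) < (2:ℝ)^(-α) :=
    Real.rpow_lt_rpow_of_exponent_lt one_lt_two (by rw [hsdef]; linarith)
  obtain ⟨X₁, hX₁⟩ := eventually_atTop.mp ((hRV 2 two_pos).eventually (eventually_ge_nhds hss))
  set X : ℝ := max 1 X₁ with hXdef
  have hX1 : 1 ≤ X := le_max_left _ _
  have hX0 : 0 < X := by linarith
  have h2 : ∀ x : ℝ, X ≤ x → (2:ℝ)^(-s) * R x ≤ R (2*x) := by
    intro x hx
    have hx0 : (0:ℝ) < x := by linarith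
    have := hX₁ x (le_trans (le_max_right 1 X₁) hx)
    rw [le_div_iff₀ (hRpos x hx0)] at this
    linarith
  have hpotter := potter_lower R hRpos hanti s X hs0.le hX1 h2
  -- constants
  have hRX : 0 < R X := hRpos X hX0
  have hR1 : 0 < R 1 := hRpos 1 one_pos
  have hR2 : 0 < R 2 := hRpos 2 two_pos
  set K₀ : ℕ := ⌈X⌉₊ with hK₀def
  have hK₀X : X ≤ (K₀:ℝ) := Nat.le_ceil X
  have hK₀1 : 1 ≤ K₀ := by
    have := hK₀X
    by_contra hcon
    push_neg at hcon
    interval_cases K₀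
    · simp at this; linarith
  set c₀ : ℝ := (2:ℝ)^(-s) * X^s * R X with hc₀def
  have hc₀0 : 0 < c₀ := by
    have h1 : (0:ℝ) < (2:ℝ)^(-s) := Real.rpow_pos_of_pos two_pos _
    have h2 : (0:ℝ) < X^s := Real.rpow_pos_of_pos hX0 _
    positivity
  set c'' : ℝ := (2:ℝ)^(1-α-δ) * c₀ with hc''def
  have hc''0 : 0 < c'' := by
    have h1 : (0:ℝ) < (2:ℝ)^(1-α-δ) := Real.rpow_pos_of_pos two_pos _
    positivity
  set A : ℝ := (K₀:ℝ) * R 1 + X * R 2 / 2 with hAdef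
  -- eventually A ≤ c'' * n^(δ/2)
  have htend : Tendsto (fun k : ℕ => c'' * (k:ℝ)^(δ/2)) atTop atTop := by
    apply Tendsto.const_mul_atTop hc''0
    exact (tendsto_rpow_atTop (by linarith)).comp tendsto_natCast_atTop_atTop
  obtain ⟨N, hN⟩ := eventually_atTop.mp (htend.eventually_ge_atTop A)
  set C : ℝ := 3 + (2:ℝ)^s + (2:ℝ)^s/(1-s) with hCdef
  have h2s0 : (0:ℝ) < (2:ℝ)^s := Real.rpow_pos_of_pos two_pos _
  have hC0 : 0 < C := by rw [hCdef]; positivity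
  refine ⟨C, hC0, max N (max (K₀+1) 2), ?_⟩
  intro n hn t ht1 ht2
  have hn2 : 2 ≤ n := le_trans (le_trans (le_max_right _ _) (le_max_right _ _)) hn
  have hnK : K₀ + 1 ≤ n := le_trans (le_trans (le_max_left _ _) (le_max_right _ _)) hn
  have hnN : N ≤ n := le_trans (le_max_left _ _) hn
  have hnX : X ≤ (n:ℝ) := le_trans hK₀X (by exact_mod_cast (by omega : K₀ ≤ n))
  have hn0 : (0:ℝ) < n := by positivity
  have ht0 : (0:ℝ) < t := lt_of_lt_of_le one_pos ht1
  have hRn0 : 0 < R n := hRpos _ hn0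
  set σ : ℝ := ∑ k ∈ Finset.Icc 1 n, R k with hσ
  have hσpos : 0 < σ := by
    apply Finset.sum_pos
    · intro k hk
      simp only [Finset.mem_Icc] at hk
      exact hRpos _ (by exact_mod_cast (by omega : 0 < k))
    · exact ⟨1, by simp only [Finset.mem_Icc]; omega⟩
  -- σ ≥ n R n
  have hσ1 : (n:ℝ) * R n ≤ σ := by
    have hterm : ∀ k ∈ Finset.Icc 1 n, R (n:ℝ) ≤ R k := by
      intro k hk
      simp only [Finset.mem_Icc] at hk
      exact hanti (Set.mem_Ioi.mpr (by exact_mod_cast (by omega : 0 < k)))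
        (Set.mem_Ioi.mpr hn0) (by exact_mod_cast hk.2)
    have := Finset.card_nsmul_le_sum (Finset.Icc 1 n) (fun k => R k) (R n) hterm
    rw [Nat.card_Icc] at this
    have hcast : ((n + 1 - 1 : ℕ):ℝ) = (n:ℝ) := by push_cast; norm_num
    calc (n:ℝ) * R n = ((n + 1 - 1:ℕ):ℝ) * R n := by rw [hcast]
      _ = (n + 1 - 1 : ℕ) • R (n:ℝ) := by rw [nsmul_eq_mul]
      _ ≤ σ := this
  -- R n lower bound and σ ≥ c₀ n^(1-s)
  have hRn_low : c₀ * (n:ℝ)^(-s) ≤ R n := by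
    have hp := hpotter X n le_rfl hnX
    have heq : ((n:ℝ)/X)^(-s) = (n:ℝ)^(-s) * X^s := by
      rw [Real.div_rpow hn0.le hX0.le, Real.rpow_neg hX0.le, div_eq_mul_inv, inv_inv]
    rw [heq] at hp
    calc c₀ * (n:ℝ)^(-s) = (2:ℝ)^(-s) * ((n:ℝ)^(-s) * X^s) * R X := by rw [hc₀def]; ring
      _ ≤ R n := hp
  have hσ2 : c₀ * (n:ℝ)^(1-s) ≤ σ := by
    have h1 : (n:ℝ)^(1-s) = (n:ℝ) * (n:ℝ)^(-s) := by
      rw [show (1:ℝ)-s = 1 + (-s) by ring, Real.rpow_add hn0, Real.rpow_one]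
    calc c₀ * (n:ℝ)^(1-s) = (n:ℝ) * (c₀ * (n:ℝ)^(-s)) := by rw [h1]; ring
      _ ≤ (n:ℝ) * R n := by
          apply mul_le_mul_of_nonneg_left hRn_low hn0.le
      _ ≤ σ := hσ1
  -- T lower bounds
  have hexp_neg : α - 1 + δ ≤ 0 := by linarith
  have hT_pos : 0 < t^(α-1+δ) := Real.rpow_pos_of_pos ht0 _
  have hT1 : ((n:ℝ)/2)^(α-1+δ) ≤ t^(α-1+δ) :=
    Real.rpow_le_rpow_of_nonpos ht0 ht2 hexp_neg
  have hkey : ((n:ℝ)/2)^(α-1+δ) * (c₀ * (n:ℝ)^(1-s)) = c'' * (n:ℝ)^(δ/2) := by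
    have e1 : ((n:ℝ)/2)^(α-1+δ) = (n:ℝ)^(α-1+δ) / (2:ℝ)^(α-1+δ) :=
      Real.div_rpow hn0.le (by norm_num : (0:ℝ) ≤ 2) _
    have e2 : (n:ℝ)^(α-1+δ) * (n:ℝ)^(1-s) = (n:ℝ)^(δ/2) := by
      rw [← Real.rpow_add hn0]
      congr 1
      rw [hsdef]; ring
    have e3 : (2:ℝ)^(1-α-δ) = ((2:ℝ)^(α-1+δ))⁻¹ := by
      rw [show (1:ℝ)-α-δ = -(α-1+δ) by ring, Real.rpow_neg (by norm_num)]
    have h2e : (0:ℝ) < (2:ℝ)^(α-1+δ) := Real.rpow_pos_of_pos two_pos _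
    calc ((n:ℝ)/2)^(α-1+δ) * (c₀ * (n:ℝ)^(1-s))
        = ((n:ℝ)^(α-1+δ) * (c₀ * (n:ℝ)^(1-s))) / (2:ℝ)^(α-1+δ) := by rw [e1]; ring
      _ = (c₀ * (n:ℝ)^(δ/2)) / (2:ℝ)^(α-1+δ) := by rw [← e2]; ring
      _ = c'' * (n:ℝ)^(δ/2) := by rw [hc''def, e3]; field_simp
  have hTσ : c'' * (n:ℝ)^(δ/2) ≤ t^(α-1+δ) * σ := by
    rw [← hkey]
    apply mul_le_mul hT1 hσ2 (by positivity) hT_pos.le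
  have hA_le : A ≤ t^(α-1+δ) * σ := le_trans (hN n hnN) hTσ
  have hA1 : (K₀:ℝ) * R 1 ≤ t^(α-1+δ) * σ := by
    have : (K₀:ℝ) * R 1 ≤ A := by
      rw [hAdef]
      have h0 : 0 ≤ X * R 2 / 2 := by positivity
      linarith only [h0]
    exact le_trans this hA_le
  have hA2 : X * R 2 / 2 ≤ t^(α-1+δ) * σ := by
    have : X * R 2 / 2 ≤ A := by
      rw [hAdef]
      have h0 : 0 ≤ (K₀:ℝ) * R 1 := by positivity
      linarith only [h0]
    exact le_trans this hA_le
  -- setup of the sum split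
  set θ : ℝ := 2*π*t/n with hθ
  have hsplit : ∑ k ∈ Finset.Icc 1 n, R k * Real.cos (2 * π * k * t / n)
      = ∑ k ∈ Finset.Ioc 0 n, R k * Real.cos (k * θ) := by
    rw [← Finset.Icc_add_one_left_eq_Ioc]
    apply Finset.sum_congr rfl
    intro k _
    congr 1
    rw [hθ]; push_cast; ring
  set m : ℕ := ⌊(n:ℝ)/t⌋₊ with hm
  have hmle : (m:ℝ) ≤ (n:ℝ)/t := Nat.floor_le (by positivity)
  have hmgt : (n:ℝ)/t < (m:ℝ) + 1 := Nat.lt_floor_add_one _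
  have hm2 : 2 ≤ m := by
    rw [hm]
    apply Nat.le_floor
    push_cast
    rw [le_div_iff₀ ht0]; linarith only [ht2]
  have hmn : m ≤ n := by
    have hmr : (m:ℝ) ≤ (n:ℝ) := le_trans hmle (div_le_self hn0.le ht1)
    exact_mod_cast hmr
  have hsum2 : ∑ k ∈ Finset.Ioc 0 m, (R k * Real.cos (k * θ)) + ∑ k ∈ Finset.Ioc m n, (R k * Real.cos (k * θ))
      = ∑ k ∈ Finset.Ioc 0 n, R k * Real.cos (k * θ) :=
    Finset.sum_Ioc_consecutive _ (by omega) hmn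
  -- generic per-k Potter bound
  have hRk_bound : ∀ k : ℕ, K₀ < k → k ≤ n → R k ≤ (2:ℝ)^s * ((n:ℝ)^s * (k:ℝ)^(-s)) * R n := by
    intro k hk hkn
    have hk0 : (0:ℝ) < k := by exact_mod_cast (by omega : 0 < k)
    have hXk : X ≤ (k:ℝ) := le_trans hK₀X (by exact_mod_cast (by omega : K₀ ≤ k))
    have hkn' : (k:ℝ) ≤ (n:ℝ) := by exact_mod_cast hkn
    have hp := hpotter k n hXk hkn'
    have hu0 : (0:ℝ) < ((n:ℝ)/(k:ℝ))^s := Real.rpow_pos_of_pos (by positivity) _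
    have h2s : (0:ℝ) < (2:ℝ)^(-s) := Real.rpow_pos_of_pos two_pos _
    have hinv : ((n:ℝ)/(k:ℝ))^(-s) = (((n:ℝ)/(k:ℝ))^s)⁻¹ := by
      rw [Real.rpow_neg (by positivity)]
    have h2inv : (2:ℝ)^(-s) = ((2:ℝ)^s)⁻¹ := by
      rw [Real.rpow_neg (by norm_num)]
    rw [hinv, h2inv] at hp
    have hdiv : ((n:ℝ)/(k:ℝ))^s = (n:ℝ)^s * (k:ℝ)^(-s) := by
      rw [Real.div_rpow hn0.le hk0.le, Real.rpow_neg hk0.le]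
      field_simp
    have hstep : R k ≤ (2:ℝ)^s * ((n:ℝ)/(k:ℝ))^s * R n := by
      have hh : (((2:ℝ)^s)⁻¹ * (((n:ℝ)/(k:ℝ))^s)⁻¹) * R k ≤ R n := hp
      have hpos : (0:ℝ) < (2:ℝ)^s * ((n:ℝ)/(k:ℝ))^s := by positivity
      rw [show ((2:ℝ)^s)⁻¹ * (((n:ℝ)/(k:ℝ))^s)⁻¹ = ((2:ℝ)^s * ((n:ℝ)/(k:ℝ))^s)⁻¹ by
        rw [mul_inv]] at hh
      calc R k = ((2:ℝ)^s * ((n:ℝ)/(k:ℝ))^s) * (((2:ℝ)^s * ((n:ℝ)/(k:ℝ))^s)⁻¹ * R k) := by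
            field_simp
        _ ≤ ((2:ℝ)^s * ((n:ℝ)/(k:ℝ))^s) * R n := by
            apply mul_le_mul_of_nonneg_left hh hpos.le
        _ = (2:ℝ)^s * ((n:ℝ)/(k:ℝ))^s * R n := by ring
    rw [hdiv] at hstep
    exact hstep
  -- first part bound
  have hS1 : |∑ k ∈ Finset.Ioc 0 m, R k * Real.cos (k * θ)|
      ≤ (1 + (2:ℝ)^s/(1-s)) * (t^(α-1+δ) * σ) := by
    have habs : |∑ k ∈ Finset.Ioc 0 m, R k * Real.cos (k * θ)| ≤ ∑ k ∈ Finset.Ioc 0 m, R k := by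
      calc |∑ k ∈ Finset.Ioc 0 m, R k * Real.cos (k * θ)|
          ≤ ∑ k ∈ Finset.Ioc 0 m, |R k * Real.cos (k * θ)| := Finset.abs_sum_le_sum_abs _ _
        _ ≤ ∑ k ∈ Finset.Ioc 0 m, R k := by
            apply Finset.sum_le_sum
            intro k hk
            simp only [Finset.mem_Ioc] at hk
            have hRk := hRpos (k:ℝ) (by exact_mod_cast hk.1)
            rw [abs_mul, abs_of_pos hRk]
            calc R k * |Real.cos (k * θ)| ≤ R k * 1 :=
                  mul_le_mul_of_nonneg_left (Real.abs_cos_le_one _) hRk.le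
              _ = R k := mul_one _
    have hsmall : ∀ M : ℕ, M ≤ K₀ → ∑ k ∈ Finset.Ioc 0 M, R k ≤ (K₀:ℝ) * R 1 := by
      intro M hM
      have hterm : ∀ k ∈ Finset.Ioc 0 M, R k ≤ R 1 := by
        intro k hk
        simp only [Finset.mem_Ioc] at hk
        exact hanti (Set.mem_Ioi.mpr one_pos)
          (Set.mem_Ioi.mpr (by exact_mod_cast hk.1)) (by exact_mod_cast hk.1)
      calc ∑ k ∈ Finset.Ioc 0 M, R k ≤ (Finset.Ioc 0 M).card • R 1 :=
            Finset.sum_le_card_nsmul _ _ _ hterm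
        _ = (M:ℝ) * R 1 := by rw [Nat.card_Ioc, nsmul_eq_mul]; norm_num
        _ ≤ (K₀:ℝ) * R 1 := by
            apply mul_le_mul_of_nonneg_right _ hR1.le
            exact_mod_cast hM
    rcases le_or_gt m K₀ with hcase | hcase
    · have h1 : ∑ k ∈ Finset.Ioc 0 m, R k ≤ (K₀:ℝ) * R 1 := hsmall m hcase
      have h2 : (0:ℝ) ≤ (2:ℝ)^s/(1-s) * (t^(α-1+δ) * σ) := by positivity
      calc |∑ k ∈ Finset.Ioc 0 m, R k * Real.cos (k * θ)| ≤ ∑ k ∈ Finset.Ioc 0 m, R k := habs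
        _ ≤ (K₀:ℝ) * R 1 := h1
        _ ≤ t^(α-1+δ) * σ := hA1
        _ ≤ (1 + (2:ℝ)^s/(1-s)) * (t^(α-1+δ) * σ) := by
            apply le_mul_of_one_le_left (by positivity)
            have : (0:ℝ) ≤ (2:ℝ)^s/(1-s) := by positivity
            linarith only [this]
    · have hsplit2 : ∑ k ∈ Finset.Ioc 0 K₀, R (k:ℝ) + ∑ k ∈ Finset.Ioc K₀ m, R (k:ℝ)
          = ∑ k ∈ Finset.Ioc 0 m, R (k:ℝ) :=
        Finset.sum_Ioc_consecutive _ (by omega) (by omega)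
      have hpart1 : ∑ k ∈ Finset.Ioc 0 K₀, R (k:ℝ) ≤ (K₀:ℝ) * R 1 := hsmall K₀ le_rfl
      have hpart2 : ∑ k ∈ Finset.Ioc K₀ m, R (k:ℝ)
          ≤ (2:ℝ)^s/(1-s) * (t^(α-1+δ) * σ) := by
        have hstep1 : ∑ k ∈ Finset.Ioc K₀ m, R (k:ℝ)
            ≤ ∑ k ∈ Finset.Ioc K₀ m, ((2:ℝ)^s * (n:ℝ)^s * R n) * (k:ℝ)^(-s) := by
          apply Finset.sum_le_sum
          intro k hk
          simp only [Finset.mem_Ioc] at hk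
          have := hRk_bound k hk.1 (le_trans hk.2 hmn)
          calc R (k:ℝ) ≤ (2:ℝ)^s * ((n:ℝ)^s * (k:ℝ)^(-s)) * R n := this
            _ = ((2:ℝ)^s * (n:ℝ)^s * R n) * (k:ℝ)^(-s) := by ring
        have hstep2 : ∑ k ∈ Finset.Ioc K₀ m, ((2:ℝ)^s * (n:ℝ)^s * R n) * (k:ℝ)^(-s)
            = ((2:ℝ)^s * (n:ℝ)^s * R n) * ∑ k ∈ Finset.Ioc K₀ m, (k:ℝ)^(-s) := by
          rw [Finset.mul_sum]
        have hstep3 : ∑ k ∈ Finset.Ioc K₀ m, (k:ℝ)^(-s) ≤ ∑ k ∈ Finset.Icc 1 m, (k:ℝ)^(-s) := by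
          apply Finset.sum_le_sum_of_subset_of_nonneg
          · intro k hk
            simp only [Finset.mem_Ioc, Finset.mem_Icc] at hk ⊢
            omega
          · intro k _ _
            exact Real.rpow_nonneg (Nat.cast_nonneg k) _
        have hstep4 : ∑ k ∈ Finset.Icc 1 m, (k:ℝ)^(-s) ≤ (1/(1-s)) * (m:ℝ)^(1-s) :=
          sum_rpow_le s hs0 hs1 m
        have hstep5 : (m:ℝ)^(1-s) ≤ ((n:ℝ)/t)^(1-s) :=
          Real.rpow_le_rpow (Nat.cast_nonneg m) hmle (by linarith)
        have heq : (n:ℝ)^s * ((n:ℝ)/t)^(1-s) = (n:ℝ) * t^(s-1) := by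
          rw [Real.div_rpow hn0.le ht0.le]
          rw [show (s:ℝ)-1 = -(1-s) by ring, Real.rpow_neg ht0.le]
          rw [div_eq_mul_inv, ← mul_assoc, ← Real.rpow_add hn0]
          norm_num
        have hts : t^(s-1) ≤ t^(α-1+δ) :=
          Real.rpow_le_rpow_of_exponent_le ht1 (by rw [hsdef]; linarith)
        have h2spos : (0:ℝ) ≤ (2:ℝ)^s := h2s0.le
        have hns : (0:ℝ) ≤ (n:ℝ)^s := (Real.rpow_pos_of_pos hn0 _).le
        calc ∑ k ∈ Finset.Ioc K₀ m, R (k:ℝ)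
            ≤ ((2:ℝ)^s * (n:ℝ)^s * R n) * ∑ k ∈ Finset.Ioc K₀ m, (k:ℝ)^(-s) := by
              rw [← hstep2]; exact hstep1
          _ ≤ ((2:ℝ)^s * (n:ℝ)^s * R n) * ((1/(1-s)) * (m:ℝ)^(1-s)) := by
              apply mul_le_mul_of_nonneg_left (le_trans hstep3 hstep4) (by positivity)
          _ ≤ ((2:ℝ)^s * (n:ℝ)^s * R n) * ((1/(1-s)) * ((n:ℝ)/t)^(1-s)) := by
              apply mul_le_mul_of_nonneg_left _ (by positivity)
              apply mul_le_mul_of_nonneg_left hstep5 (by positivity)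
          _ = (2:ℝ)^s/(1-s) * (t^(s-1) * ((n:ℝ) * R n)) := by
              rw [show ((2:ℝ)^s * (n:ℝ)^s * R n) * ((1/(1-s)) * ((n:ℝ)/t)^(1-s))
                  = (2:ℝ)^s/(1-s) * (((n:ℝ)^s * ((n:ℝ)/t)^(1-s)) * R n) by ring, heq]
              ring
          _ ≤ (2:ℝ)^s/(1-s) * (t^(α-1+δ) * σ) := by
              apply mul_le_mul_of_nonneg_left _ (by positivity)
              apply mul_le_mul hts hσ1 (by positivity) hT_pos.le
      calc |∑ k ∈ Finset.Ioc 0 m, R k * Real.cos (k * θ)| ≤ ∑ k ∈ Finset.Ioc 0 m, R k := habs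
        _ = ∑ k ∈ Finset.Ioc 0 K₀, R (k:ℝ) + ∑ k ∈ Finset.Ioc K₀ m, R (k:ℝ) := hsplit2.symm
        _ ≤ (K₀:ℝ) * R 1 + (2:ℝ)^s/(1-s) * (t^(α-1+δ) * σ) := add_le_add hpart1 hpart2
        _ ≤ t^(α-1+δ) * σ + (2:ℝ)^s/(1-s) * (t^(α-1+δ) * σ) := add_le_add_left hA1 _
        _ = (1 + (2:ℝ)^s/(1-s)) * (t^(α-1+δ) * σ) := by ring
  -- second part bound
  have hB : ∀ j, m ≤ j → j ≤ n → |∑ i ∈ Finset.Ioc m j, Real.cos (i * θ)| ≤ (n:ℝ)/(2*t) :=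
    fun j _ _ => partial_cos_bound n t (by omega) ht1 ht2 m j
  have habel := abel_antitone_bound (fun k : ℕ => R k) (fun k : ℕ => Real.cos (k * θ)) m n hmn
    ((n:ℝ)/(2*t)) hB
    (fun k l hk hkl => by
      have hk0 : (0:ℝ) < k := by exact_mod_cast (by omega : 0 < k)
      have hl0 : (0:ℝ) < l := by exact_mod_cast (by omega : 0 < l)
      exact hanti (Set.mem_Ioi.mpr hk0) (Set.mem_Ioi.mpr hl0) (by exact_mod_cast hkl))
    (by
        exact (hRpos ((n+1:ℕ):ℝ) (by exact_mod_cast Nat.succ_pos n)).le)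
  have hm1cast : ((m+1:ℕ):ℝ) = (m:ℝ) + 1 := by push_cast; ring
  have hm1pos : (0:ℝ) < ((m+1:ℕ):ℝ) := by rw [hm1cast]; positivity
  have hS2 : |∑ k ∈ Finset.Ioc m n, R k * Real.cos (k * θ)|
      ≤ (1 + (2:ℝ)^s) * (t^(α-1+δ) * σ) := by
    have hBn : (0:ℝ) ≤ (n:ℝ)/(2*t) := by positivity
    rcases le_or_gt X ((n:ℝ)/t) with hcase | hcase
    · -- Potter regime
      have hnt0 : (0:ℝ) < (n:ℝ)/t := by positivity
      have hRm1 : R ((m+1:ℕ):ℝ) ≤ R ((n:ℝ)/t) := by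
        apply hanti (Set.mem_Ioi.mpr hnt0) (Set.mem_Ioi.mpr hm1pos)
        rw [hm1cast]; linarith
      have hp := hpotter ((n:ℝ)/t) n hcase (div_le_self hn0.le ht1)
      have heqt : (n:ℝ)/((n:ℝ)/t) = t := by field_simp
      rw [heqt] at hp
      have hRnt : R ((n:ℝ)/t) ≤ (2:ℝ)^s * t^s * R n := by
        have hts0 : (0:ℝ) < t^s := Real.rpow_pos_of_pos ht0 _
        have hinv : t^(-s) = (t^s)⁻¹ := Real.rpow_neg ht0.le _
        have h2inv : (2:ℝ)^(-s) = ((2:ℝ)^s)⁻¹ := Real.rpow_neg (by norm_num) _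
        rw [hinv, h2inv] at hp
        have hpos : (0:ℝ) < (2:ℝ)^s * t^s := by positivity
        rw [show ((2:ℝ)^s)⁻¹ * (t^s)⁻¹ = ((2:ℝ)^s * t^s)⁻¹ by rw [mul_inv]] at hp
        calc R ((n:ℝ)/t) = ((2:ℝ)^s * t^s) * (((2:ℝ)^s * t^s)⁻¹ * R ((n:ℝ)/t)) := by
              field_simp
          _ ≤ ((2:ℝ)^s * t^s) * R n := mul_le_mul_of_nonneg_left hp hpos.le
          _ = (2:ℝ)^s * t^s * R n := by ring
      have hts1 : t^(s-1) ≤ t^(α-1+δ) :=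
        Real.rpow_le_rpow_of_exponent_le ht1 (by rw [hsdef]; linarith)
      have htss : t^s / t = t^(s-1) := by
        rw [Real.rpow_sub ht0, Real.rpow_one]
      calc |∑ k ∈ Finset.Ioc m n, R k * Real.cos (k * θ)|
          ≤ (n:ℝ)/(2*t) * R ((m+1:ℕ):ℝ) := habel
        _ ≤ (n:ℝ)/(2*t) * ((2:ℝ)^s * t^s * R n) := by
            apply mul_le_mul_of_nonneg_left (le_trans hRm1 hRnt) hBn
        _ = (2:ℝ)^s/2 * (t^(s-1) * ((n:ℝ) * R n)) := by
            rw [← htss]; field_simp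
        _ ≤ (2:ℝ)^s/2 * (t^(α-1+δ) * σ) := by
            apply mul_le_mul_of_nonneg_left _ (by positivity)
            apply mul_le_mul hts1 hσ1 (by positivity) hT_pos.le
        _ ≤ (1 + (2:ℝ)^s) * (t^(α-1+δ) * σ) := by
            apply mul_le_mul_of_nonneg_right _ (by positivity)
            linarith only [h2s0]
    · -- boundary regime
      have hRm1 : R ((m+1:ℕ):ℝ) ≤ R 2 := by
        apply hanti (Set.mem_Ioi.mpr two_pos) (Set.mem_Ioi.mpr hm1pos)
        rw [hm1cast]
        have : (2:ℝ) ≤ (m:ℝ) := by exact_mod_cast hm2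
        linarith
      have hnt : (n:ℝ)/(2*t) ≤ X/2 := by
        rw [div_le_div_iff₀ (by positivity) two_pos]
        have : (n:ℝ)/t < X := hcase
        rw [div_lt_iff₀ ht0] at this
        linarith only [this]
      calc |∑ k ∈ Finset.Ioc m n, R k * Real.cos (k * θ)|
          ≤ (n:ℝ)/(2*t) * R ((m+1:ℕ):ℝ) := habel
        _ ≤ X/2 * R 2 := by
            apply mul_le_mul hnt hRm1 (hRpos _ hm1pos).le (by positivity)
        _ = X * R 2 / 2 := by ring
        _ ≤ t^(α-1+δ) * σ := hA2
        _ ≤ (1 + (2:ℝ)^s) * (t^(α-1+δ) * σ) := by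
            apply le_mul_of_one_le_left (by positivity)
            linarith only [h2s0]
  -- combine
  rw [hsplit, ← hsum2]
  calc |∑ k ∈ Finset.Ioc 0 m, (R k * Real.cos (k * θ)) + ∑ k ∈ Finset.Ioc m n, (R k * Real.cos (k * θ))|
      ≤ |∑ k ∈ Finset.Ioc 0 m, (R k * Real.cos (k * θ))| + |∑ k ∈ Finset.Ioc m n, (R k * Real.cos (k * θ))| :=
        abs_add_le _ _
    _ ≤ (1 + (2:ℝ)^s/(1-s)) * (t^(α-1+δ) * σ) + (1 + (2:ℝ)^s) * (t^(α-1+δ) * σ) :=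
        add_le_add hS1 hS2
    _ = (2 + (2:ℝ)^s + (2:ℝ)^s/(1-s)) * (t^(α-1+δ) * σ) := by ring
    _ ≤ C * (t^(α-1+δ) * σ) := by
        apply mul_le_mul_of_nonneg_right _ (by positivity)
        rw [hCdef]
        linarith only []
    _ = C * t^(α-1+δ) * σ := by ring
    _ ≤ (C * max (t^(α-1+δ)) (1/t)) * σ := by
        apply mul_le_mul_of_nonneg_right _ hσpos.le
        apply mul_le_mul_of_nonneg_left (le_max_left _ _) hC0.le

/-- Decay of the covariance `ρ_n(t) = σ_n^{-2} Σ_{k=1}^n R(k) cos(2πkt/n)` for a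
monotone regularly varying `R` with index `-α`, `α < 1`: for every `δ > 0` one has
`|ρ_n(t)| ≤ C max(t^{α-1+δ}, 1/t)` for `n` large and `t ∈ [1, n/2]`. -/
theorem covariance_decay_bound
    (R : ℝ → ℝ) (hRpos : ∀ x : ℝ, 0 < x → 0 < R x)
    (hRmono : MonotoneOn R (Set.Ioi (0 : ℝ)) ∨ AntitoneOn R (Set.Ioi (0 : ℝ)))
    (hRbdd : ∀ K : Set ℝ, K ⊆ Set.Ioi 0 → IsCompact K →
      ∃ m M : ℝ, 0 < m ∧ ∀ x ∈ K, m ≤ R x ∧ R x ≤ M)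
    (α : ℝ) (hα : α < 1) (hRV : RegularlyVarying R (-α))
    (ρ : ℕ → ℝ → ℝ)
    (hρ : ∀ (n : ℕ) (t : ℝ), ρ n t =
      (∑ k ∈ Finset.Icc 1 n, R k * Real.cos (2 * π * k * t / n)) /
        (∑ k ∈ Finset.Icc 1 n, R k)) :
    ∀ δ : ℝ, 0 < δ → ∃ C : ℝ, 0 < C ∧ ∃ n₀ : ℕ, ∀ n : ℕ, n₀ ≤ n →
      ∀ t : ℝ, 1 ≤ t → t ≤ (n : ℝ) / 2 →
        |ρ n t| ≤ C * max (t ^ (α - 1 + δ)) (1 / t) := by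
  intro δ hδ
  set δ' : ℝ := min δ ((1-α)/2) with hδ'def
  have hδ'0 : 0 < δ' := lt_min hδ (by linarith)
  have hδ'le : δ' ≤ (1-α)/2 := min_le_right _ _
  have hδ'δ : δ' ≤ δ := min_le_left _ _
  have hbr : ∃ C : ℝ, 0 < C ∧ ∃ n₀ : ℕ, ∀ n : ℕ, n₀ ≤ n → ∀ t : ℝ, 1 ≤ t → t ≤ (n:ℝ)/2 →
      |∑ k ∈ Finset.Icc 1 n, R k * Real.cos (2 * π * k * t / n)|
        ≤ (C * max (t ^ (α - 1 + δ')) (1 / t)) * (∑ k ∈ Finset.Icc 1 n, R k) := by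
    rcases hRmono with hmono | hanti
    · exact mono_branch R hRpos hmono α δ' hα hδ'0 hδ'le hRV
    · exact anti_branch R hRpos hanti α δ' hα hδ'0 hδ'le hRV
  obtain ⟨C, hC, n₀, hbound⟩ := hbr
  refine ⟨C, hC, n₀, ?_⟩
  intro n hn t ht1 ht2
  have hn2 : 2 ≤ n := by
    have : (2:ℝ) ≤ (n:ℝ) := by linarith
    exact_mod_cast this
  have hσpos : 0 < ∑ k ∈ Finset.Icc 1 n, R k := by
    apply Finset.sum_pos
    · intro k hk
      simp only [Finset.mem_Icc] at hk
      exact hRpos _ (by exact_mod_cast (by omega : 0 < k))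
    · exact ⟨1, by simp only [Finset.mem_Icc]; omega⟩
  have h := hbound n hn t ht1 ht2
  have hmax : max (t ^ (α - 1 + δ')) (1/t) ≤ max (t ^ (α - 1 + δ)) (1/t) := by
    apply max_le_max _ le_rfl
    exact Real.rpow_le_rpow_of_exponent_le ht1 (by linarith)
  rw [hρ n t, abs_div, abs_of_pos hσpos, div_le_iff₀ hσpos]
  calc |∑ k ∈ Finset.Icc 1 n, R k * Real.cos (2 * π * k * t / n)|
      ≤ (C * max (t ^ (α - 1 + δ')) (1 / t)) * (∑ k ∈ Finset.Icc 1 n, R k) := h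
    _ ≤ (C * max (t ^ (α - 1 + δ)) (1 / t)) * (∑ k ∈ Finset.Icc 1 n, R k) := by
        apply mul_le_mul_of_nonneg_right _ hσpos.le
        exact mul_le_mul_of_nonneg_left hmax hC.le
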